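/- Let G1, G2 be groups and φ : G1 → G2 a bijection such that a multiset over G1 is a product-one sequence over G1 if and only if its termwise image under φ is a product-one sequence over G2. Suppose g1, g2, g3 in G1 satisfy: (i) φ(g1 g2) = φ(g1) φ(g2) and φ(g1 g3) = φ(g3) φ(g1); (ii) g1 g2 ≠ g2 g1 and g1 g3 ≠ g3 g1; (iii) g2 g3 = g3 g2. Then for every positive integer n: g1ⁿ g2 ≠ g2 g1ⁿ and g1ⁿ g3 ≠ g3 g1ⁿ; φ(g1ⁿ g2) = φ(g1ⁿ) φ(g2) and φ(g1ⁿ g3) = φ(g3) φ(g1ⁿ); and φ(g2 g1ⁿ) = φ(g2) φ(g1ⁿ) and φ(g3 g1ⁿ) = φ(g1ⁿ) φ(g3). -/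

import Mathlib

/-- A multiset `S` over a group `G` is a *product-one sequence* if its terms can be
ordered so that their product is `1`. -/
def IsProductOne {G : Type*} [Group G] (S : Multiset G) : Prop :=
  ∃ l : List G, (l : Multiset G) = S ∧ l.prod = 1

/-- The monoid `B(G)` of product-one sequences over `G`, as a submonoid of the free
abelian monoid (finite multisets under addition) over `G`. -/
def ProductOneSubmonoid (G : Type*) [Group G] : AddSubmonoid (Multiset G) where
  carrier := {S | IsProductOne S}
  zero_mem' := ⟨[], rfl, rfl⟩
  add_mem' := by
    rintro a b ⟨l1, rfl, p1⟩ ⟨l2, rfl, p2⟩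
    exact ⟨l1 ++ l2, by simp, by simp [p1, p2]⟩


section Infra
variable {G : Type*} [Group G]

lemma ipo_intro (l : List G) (hl : l.prod = 1) : IsProductOne (↑l : Multiset G) :=
  ⟨l, rfl, hl⟩

lemma ipo_rot {a : G} {T : Multiset G} (h : IsProductOne (a ::ₘ T)) :
    ∃ l : List G, (↑l : Multiset G) = T ∧ a * l.prod = 1 := by
  obtain ⟨L, hL, hp⟩ := h
  have ha : a ∈ L := by
    rw [← Multiset.mem_coe, hL]; exact Multiset.mem_cons_self a T
  obtain ⟨s, t, rfl⟩ := List.append_of_mem ha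
  have hperm : (↑(a :: (s ++ t)) : Multiset G) = a ::ₘ T := by
    rw [← hL]; exact Multiset.coe_eq_coe.mpr List.perm_middle.symm
  have hT : (↑(s ++ t) : Multiset G) = T := by
    have := hperm
    rw [← Multiset.cons_coe] at this
    exact (Multiset.cons_inj_right a).mp this
  refine ⟨t ++ s, ?_, ?_⟩
  · rw [← hT]; exact Multiset.coe_eq_coe.mpr (List.perm_append_comm)
  · have hps : s.prod * (a * t.prod) = 1 := by
      simpa [List.prod_append, List.prod_cons, mul_assoc] using hp
    have h2 : a * t.prod = s.prod⁻¹ := (inv_eq_of_mul_eq_one_right hps).symm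
    rw [List.prod_append, ← mul_assoc, h2, inv_mul_cancel]

lemma prod_of_coe_pair {l : List G} {b c : G} (h : (↑l : Multiset G) = ↑[b, c]) :
    l.prod = b * c ∨ l.prod = c * b := by
  have hp : l.Perm [b, c] := Multiset.coe_eq_coe.mp h
  have hb : b ∈ l := hp.mem_iff.mpr (by simp)
  obtain ⟨s, t, rfl⟩ := List.append_of_mem hb
  have h2 : (s ++ t).Perm [c] := by
    have := (List.perm_middle.symm).trans hp
    exact this.cons_inv
  have h3 : s ++ t = [c] := List.perm_singleton.mp h2
  rcases s with _ | ⟨hd, tl⟩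
  · simp at h3
    subst h3; left; simp
  · have : hd = c ∧ tl ++ t = [] := by
      constructor
      · exact (List.cons_eq_cons.mp h3).1
      · exact (List.cons_eq_cons.mp h3).2
    obtain ⟨rfl, h4⟩ := this
    have h5 : tl = [] ∧ t = [] := List.append_eq_nil_iff.mp h4
    obtain ⟨rfl, rfl⟩ := h5
    right; simp

lemma ipo_pair {a b : G} (h : IsProductOne (↑[a, b] : Multiset G)) : a * b = 1 := by
  have h' : IsProductOne (a ::ₘ (↑[b] : Multiset G)) := by
    rwa [Multiset.cons_coe]
  obtain ⟨l, hl, hp⟩ := ipo_rot h'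
  have : l = [b] := List.perm_singleton.mp (Multiset.coe_eq_coe.mp hl)
  subst this
  simpa using hp

lemma ipo_triple {a b c : G} (h : IsProductOne (↑[a, b, c] : Multiset G)) :
    a * (b * c) = 1 ∨ a * (c * b) = 1 := by
  have h' : IsProductOne (a ::ₘ (↑[b, c] : Multiset G)) := by
    rwa [Multiset.cons_coe]
  obtain ⟨l, hl, hp⟩ := ipo_rot h'
  rcases prod_of_coe_pair hl with h2 | h2 <;> rw [h2] at hp
  · exact Or.inl hp
  · exact Or.inr hp

lemma ipo_triple_intro {a b c : G} (h : a * (b * c) = 1) :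
    IsProductOne (↑[a, b, c] : Multiset G) :=
  ipo_intro _ (by simpa [mul_assoc] using h)

lemma ipo_pair_intro {a b : G} (h : a * b = 1) :
    IsProductOne (↑[a, b] : Multiset G) :=
  ipo_intro _ (by simpa [mul_assoc] using h)

end Infra

section Op
open MulOpposite
variable {G : Type*} [Group G]

lemma ipo_op_mpr (T : Multiset G) (h : IsProductOne T) :
    IsProductOne (T.map op) := by
  obtain ⟨l, hl, hp⟩ := h
  refine ⟨(l.map op).reverse, ?_, ?_⟩
  · rw [← hl]
    have : ((l.map op).reverse : Multiset Gᵐᵒᵖ) = ↑(l.map op) :=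
      Multiset.coe_eq_coe.mpr (List.reverse_perm _)
    rw [this]
    simp
  · rw [← MulOpposite.op_list_prod, hp, op_one]

lemma ipo_op_mp (T : Multiset Gᵐᵒᵖ) (h : IsProductOne T) :
    IsProductOne (T.map unop) := by
  obtain ⟨l, hl, hp⟩ := h
  refine ⟨(l.map unop).reverse, ?_, ?_⟩
  · rw [← hl]
    have : ((l.map unop).reverse : Multiset G) = ↑(l.map unop) :=
      Multiset.coe_eq_coe.mpr (List.reverse_perm _)
    rw [this]
    simp
  · rw [← MulOpposite.unop_list_prod, hp, unop_one]

lemma ipo_op (T : Multiset G) : IsProductOne (T.map op) ↔ IsProductOne T := by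
  constructor
  · intro h
    have := ipo_op_mp _ h
    simpa [Multiset.map_map] using this
  · exact ipo_op_mpr T

end Op

section Phi
variable {G1 G2 : Type*} [Group G1] [Group G2]

lemma phi_inv (φ : G1 → G2) (h : ∀ S : Multiset G1, IsProductOne S ↔ IsProductOne (S.map φ))
    (g : G1) : φ g⁻¹ = (φ g)⁻¹ := by
  have h1 : IsProductOne (↑[g, g⁻¹] : Multiset G1) := ipo_pair_intro (by simp)
  have h2 := (h _).mp h1
  rw [Multiset.map_coe] at h2
  have h3 : φ g * φ g⁻¹ = 1 := ipo_pair (by simpa using h2)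
  exact inv_eq_of_mul_eq_one_right h3 ▸ (inv_eq_of_mul_eq_one_right h3).symm ▸ rfl

lemma weak_hom (φ : G1 → G2) (h : ∀ S : Multiset G1, IsProductOne S ↔ IsProductOne (S.map φ))
    (a b : G1) : φ (a * b) = φ a * φ b ∨ φ (a * b) = φ b * φ a := by
  have h1 : IsProductOne (↑[a, b, (a * b)⁻¹] : Multiset G1) :=
    ipo_triple_intro (by group)
  have h2 := (h _).mp h1
  rw [Multiset.map_coe] at h2
  have h2' : IsProductOne (↑[φ a, φ b, φ ((a * b)⁻¹)] : Multiset G2) := by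
    simpa only [List.map_cons, List.map_nil] using h2
  rw [phi_inv φ h] at h2'
  rcases ipo_triple h2' with h3 | h3
  · left
    have : φ a * φ b * (φ (a * b))⁻¹ = 1 := by rwa [mul_assoc]
    rw [mul_inv_eq_one] at this
    exact this.symm
  · right
    have h4 : φ a * (φ (a * b))⁻¹ * φ b = 1 := by rwa [← mul_assoc] at h3
    have h5 : φ a * (φ (a * b))⁻¹ = (φ b)⁻¹ := eq_inv_of_mul_eq_one_left h4
    have h6 : φ a = (φ b)⁻¹ * φ (a * b) := by
      rw [← h5]; group
    rw [h6]; group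

lemma psi_h (φ : G1 → G2) (hbij : Function.Bijective φ)
    (h : ∀ S : Multiset G1, IsProductOne S ↔ IsProductOne (S.map φ)) :
    ∀ T : Multiset G2, IsProductOne T ↔ IsProductOne (T.map (Equiv.ofBijective φ hbij).symm) := by
  intro T
  rw [h (T.map (Equiv.ofBijective φ hbij).symm)]
  rw [Multiset.map_map]
  have : (φ ∘ ⇑(Equiv.ofBijective φ hbij).symm) = id := by
    funext t
    exact (Equiv.ofBijective φ hbij).apply_symm_apply t
  rw [this, Multiset.map_id]

lemma comm_push1 (φ : G1 → G2) (hbij : Function.Bijective φ)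
    (h : ∀ S : Multiset G1, IsProductOne S ↔ IsProductOne (S.map φ))
    {a b : G1} (hab : a * b = b * a) : φ (a * b) = φ a * φ b := by
  set e := Equiv.ofBijective φ hbij with he
  have hw := weak_hom (⇑e.symm) (psi_h φ hbij h) (φ a) (φ b)
  have hea : e.symm (φ a) = a := e.symm_apply_apply a
  have heb : e.symm (φ b) = b := e.symm_apply_apply b
  have key : e.symm (φ a * φ b) = a * b := by
    rcases hw with hw | hw <;> rw [hw, hea, heb]
    exact hab.symm
  have := congrArg e key
  rw [e.apply_symm_apply] at this
  exact this.symm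

lemma comm_push (φ : G1 → G2) (hbij : Function.Bijective φ)
    (h : ∀ S : Multiset G1, IsProductOne S ↔ IsProductOne (S.map φ))
    {a b : G1} (hab : a * b = b * a) :
    φ (a * b) = φ a * φ b ∧ φ (a * b) = φ b * φ a := by
  refine ⟨comm_push1 φ hbij h hab, ?_⟩
  rw [hab]
  exact comm_push1 φ hbij h hab.symm

lemma noncomm_push (φ : G1 → G2) (hbij : Function.Bijective φ)
    (h : ∀ S : Multiset G1, IsProductOne S ↔ IsProductOne (S.map φ))
    {a b : G1} (hab : a * b ≠ b * a) : φ a * φ b ≠ φ b * φ a := by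
  intro hc
  apply hab
  set e := Equiv.ofBijective φ hbij with he
  have hpsi := psi_h φ hbij h
  have hbij' : Function.Bijective (⇑e.symm) := e.symm.bijective
  have hea : e.symm (φ a) = a := e.symm_apply_apply a
  have heb : e.symm (φ b) = b := e.symm_apply_apply b
  have h1 := comm_push1 (⇑e.symm) hbij' hpsi (a := φ a) (b := φ b) hc
  have h2 := comm_push1 (⇑e.symm) hbij' hpsi (a := φ b) (b := φ a) hc.symm
  rw [hea, heb] at h1
  rw [hea, heb] at h2
  rw [hc] at h1
  rw [h1] at h2
  exact h2

lemma phi_pow (φ : G1 → G2) (hbij : Function.Bijective φ)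
    (h : ∀ S : Multiset G1, IsProductOne S ↔ IsProductOne (S.map φ))
    (g : G1) : ∀ n : ℕ, φ (g ^ n) = (φ g) ^ n := by
  intro n
  induction n with
  | zero =>
    simp only [pow_zero]
    have h1 : IsProductOne (↑[(1 : G1)] : Multiset G1) := ipo_intro _ (by simp)
    have h2 := (h _).mp h1
    rw [Multiset.map_coe] at h2
    obtain ⟨l, hl, hp⟩ := h2
    have : l = [φ 1] := List.perm_singleton.mp (Multiset.coe_eq_coe.mp (by simpa using hl))
    subst this
    simpa using hp
  | succ n ih =>
    rw [pow_succ, pow_succ, ← ih]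
    exact comm_push1 φ hbij h (by rw [← pow_succ, ← pow_succ'])

end Phi
section Vals
variable {G1 G2 : Type*} [Group G1] [Group G2]

lemma val_left_homo (φ : G1 → G2) (hbij : Function.Bijective φ)
    (h : ∀ S : Multiset G1, IsProductOne S ↔ IsProductOne (S.map φ)) (a u : G1) (hb : φ (a * u) = φ a * φ u) :
    ∀ n : ℕ, (∀ k, 1 ≤ k → k < n → a ^ k * u ≠ u * a ^ k) →
      φ (a ^ n * u) = (φ a) ^ n * φ u := by
  intro n
  induction n with
  | zero => intro _; simp
  | succ n ih =>
    intro N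
    rcases Nat.eq_zero_or_pos n with rfl | hn
    · simpa using hb
    · have ihv := ih (fun k h1 h2 => N k h1 (h2.trans (Nat.lt_succ_self n)))
      have NG2 : ¬ ((φ a) ^ n * φ u = φ u * (φ a) ^ n) := by
        have := noncomm_push φ hbij h (N n hn (Nat.lt_succ_self n))
        rw [phi_pow φ hbij h] at this
        exact this
      have hps : a ^ (n + 1) * u = a * (a ^ n * u) := by
        rw [← mul_assoc, ← pow_succ']
      have w1 := weak_hom φ h a (a ^ n * u)
      rw [← hps, ihv] at w1
      have w2 := weak_hom φ h (a ^ (n + 1)) u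
      rw [phi_pow φ hbij h] at w2
      rcases w2 with w2 | w2
      · exact w2
      · rcases w1 with w1 | w1
        · rw [w1, ← mul_assoc, ← pow_succ']
        · exfalso
          rw [w2] at w1
          apply NG2
          have hcan : (φ u * φ a ^ n) * φ a = (φ a ^ n * φ u) * φ a := by
            rw [mul_assoc, ← pow_succ]; exact w1
          exact (mul_right_cancel hcan).symm

lemma val_right_homo (φ : G1 → G2) (hbij : Function.Bijective φ)
    (h : ∀ S : Multiset G1, IsProductOne S ↔ IsProductOne (S.map φ)) (a u : G1) (hb : φ (u * a) = φ u * φ a) :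
    ∀ n : ℕ, (∀ k, 1 ≤ k → k < n → a ^ k * u ≠ u * a ^ k) →
      φ (u * a ^ n) = φ u * (φ a) ^ n := by
  intro n
  induction n with
  | zero => intro _; simp
  | succ n ih =>
    intro N
    rcases Nat.eq_zero_or_pos n with rfl | hn
    · simpa using hb
    · have ihv := ih (fun k h1 h2 => N k h1 (h2.trans (Nat.lt_succ_self n)))
      have NG2 : ¬ ((φ a) ^ n * φ u = φ u * (φ a) ^ n) := by
        have := noncomm_push φ hbij h (N n hn (Nat.lt_succ_self n))
        rw [phi_pow φ hbij h] at this
        exact this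
      have hps : u * a ^ (n + 1) = (u * a ^ n) * a := by
        rw [mul_assoc, ← pow_succ]
      have w1 := weak_hom φ h (u * a ^ n) a
      rw [← hps, ihv] at w1
      have w2 := weak_hom φ h u (a ^ (n + 1))
      rw [phi_pow φ hbij h] at w2
      rcases w2 with w2 | w2
      · exact w2
      · rcases w1 with w1 | w1
        · rw [w1, mul_assoc, ← pow_succ]
        · exfalso
          rw [w2] at w1
          -- w1 : φ a ^ (n+1) * φ u = φ a * (φ u * φ a ^ n)
          apply NG2
          have hcan : φ a * (φ a ^ n * φ u) = φ a * (φ u * φ a ^ n) := by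
            rw [← mul_assoc, ← pow_succ']; exact w1
          exact mul_left_cancel hcan

lemma val_left_anti (φ : G1 → G2) (hbij : Function.Bijective φ)
    (h : ∀ S : Multiset G1, IsProductOne S ↔ IsProductOne (S.map φ)) (a u : G1) (hb : φ (a * u) = φ u * φ a) :
    ∀ n : ℕ, (∀ k, 1 ≤ k → k < n → a ^ k * u ≠ u * a ^ k) →
      φ (a ^ n * u) = φ u * (φ a) ^ n := by
  intro n
  induction n with
  | zero => intro _; simp
  | succ n ih =>
    intro N
    rcases Nat.eq_zero_or_pos n with rfl | hn
    · simpa using hb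
    · have ihv := ih (fun k h1 h2 => N k h1 (h2.trans (Nat.lt_succ_self n)))
      have NG2 : ¬ ((φ a) ^ n * φ u = φ u * (φ a) ^ n) := by
        have := noncomm_push φ hbij h (N n hn (Nat.lt_succ_self n))
        rw [phi_pow φ hbij h] at this
        exact this
      have hps : a ^ (n + 1) * u = a * (a ^ n * u) := by
        rw [← mul_assoc, ← pow_succ']
      have w1 := weak_hom φ h a (a ^ n * u)
      rw [← hps, ihv] at w1
      have w2 := weak_hom φ h (a ^ (n + 1)) u
      rw [phi_pow φ hbij h] at w2
      rcases w2 with w2 | w2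
      · -- φ (a^(n+1) * u) = φ a ^ (n+1) * φ u ; show it equals φ u * φ a ^ (n+1)
        rcases w1 with w1 | w1
        · exfalso
          rw [w2] at w1
          -- w1 : φ a ^ (n+1) * φ u = φ a * (φ u * φ a ^ n)
          apply NG2
          have hcan : φ a * (φ a ^ n * φ u) = φ a * (φ u * φ a ^ n) := by
            rw [← mul_assoc, ← pow_succ']; exact w1
          exact mul_left_cancel hcan
        · rw [w1, mul_assoc, ← pow_succ]
      · exact w2

lemma val_right_anti (φ : G1 → G2) (hbij : Function.Bijective φ)
    (h : ∀ S : Multiset G1, IsProductOne S ↔ IsProductOne (S.map φ)) (a u : G1) (hb : φ (u * a) = φ a * φ u) :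
    ∀ n : ℕ, (∀ k, 1 ≤ k → k < n → a ^ k * u ≠ u * a ^ k) →
      φ (u * a ^ n) = (φ a) ^ n * φ u := by
  intro n
  induction n with
  | zero => intro _; simp
  | succ n ih =>
    intro N
    rcases Nat.eq_zero_or_pos n with rfl | hn
    · simpa using hb
    · have ihv := ih (fun k h1 h2 => N k h1 (h2.trans (Nat.lt_succ_self n)))
      have NG2 : ¬ ((φ a) ^ n * φ u = φ u * (φ a) ^ n) := by
        have := noncomm_push φ hbij h (N n hn (Nat.lt_succ_self n))
        rw [phi_pow φ hbij h] at this
        exact this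
      have hps : u * a ^ (n + 1) = (u * a ^ n) * a := by
        rw [mul_assoc, ← pow_succ]
      have w1 := weak_hom φ h (u * a ^ n) a
      rw [← hps, ihv] at w1
      have w2 := weak_hom φ h u (a ^ (n + 1))
      rw [phi_pow φ hbij h] at w2
      rcases w2 with w2 | w2
      · rcases w1 with w1 | w1
        · exfalso
          rw [w2] at w1
          -- w1 : φ u * φ a ^ (n+1) = (φ a ^ n * φ u) * φ a
          apply NG2
          have hcan : (φ u * φ a ^ n) * φ a = (φ a ^ n * φ u) * φ a := by
            rw [mul_assoc, ← pow_succ]; exact w1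
          exact (mul_right_cancel hcan).symm
        · rw [w1, ← mul_assoc, ← pow_succ']
      · exact w2

end Vals

theorem key_lemma (G1 G2 : Type*) [Group G1] [Group G2]
    (φ : G1 → G2) (hbij : Function.Bijective φ)
    (h : ∀ S : Multiset G1, IsProductOne S ↔ IsProductOne (S.map φ))
    (g1 g2 g3 : G1)
    (h12 : φ (g1 * g2) = φ g1 * φ g2) (h13 : φ (g1 * g3) = φ g3 * φ g1)
    (hne12 : g1 * g2 ≠ g2 * g1) (hne13 : g1 * g3 ≠ g3 * g1)
    (hcomm : g2 * g3 = g3 * g2)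
    (m : ℕ) (hm : 2 ≤ m)
    (N : ∀ k, 1 ≤ k → k < m → g1 ^ k * g2 ≠ g2 * g1 ^ k ∧ g1 ^ k * g3 ≠ g3 * g1 ^ k)
    (M : g1 ^ m * g2 = g2 * g1 ^ m) : False := by
  have inj := hbij.1
  set x := φ g1 with hx
  set y := φ g2 with hy
  set z := φ g3 with hz
  -- base values
  have hb_g2r : φ (g2 * g1) = y * x := by
    rcases weak_hom φ h g2 g1 with hw | hw
    · exact hw
    · exact absurd (inj (hw.trans h12.symm)) (fun hc => hne12 hc.symm)
  have hb_g3r : φ (g3 * g1) = x * z := by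
    rcases weak_hom φ h g3 g1 with hw | hw
    · exact absurd (inj (hw.trans h13.symm)) (fun hc => hne13 hc.symm)
    · exact hw
  -- noncommutativity in G2
  have Ny1 : x * y ≠ y * x := noncomm_push φ hbij h hne12
  have Nz1 : x * z ≠ z * x := noncomm_push φ hbij h hne13
  have NyG2 : ∀ k, 1 ≤ k → k < m → x ^ k * y ≠ y * x ^ k := by
    intro k h1 h2
    have := noncomm_push φ hbij h (N k h1 h2).1
    rwa [phi_pow φ hbij h] at this
  have NzG2 : ∀ k, 1 ≤ k → k < m → x ^ k * z ≠ z * x ^ k := by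
    intro k h1 h2
    have := noncomm_push φ hbij h (N k h1 h2).2
    rwa [phi_pow φ hbij h] at this
  -- commutation facts in G2
  have hyzval : φ (g2 * g3) = y * z := (comm_push φ hbij h hcomm).1
  have hyz : y * z = z * y :=
    (comm_push φ hbij h hcomm).1.symm.trans (comm_push φ hbij h hcomm).2
  have My2 : x ^ m * y = y * x ^ m := by
    have h1 := (comm_push φ hbij h M).1
    have h2 := (comm_push φ hbij h M).2
    rw [phi_pow φ hbij h] at h1 h2
    exact h1.symm.trans h2
  -- value lemmas
  have vg2L : ∀ n, n ≤ m → φ (g1 ^ n * g2) = x ^ n * y := fun n hn =>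
    val_left_homo φ hbij h g1 g2 h12 n (fun k a b => (N k a (lt_of_lt_of_le b hn)).1)
  have vg2R : ∀ n, n ≤ m → φ (g2 * g1 ^ n) = y * x ^ n := fun n hn =>
    val_right_homo φ hbij h g1 g2 hb_g2r n (fun k a b => (N k a (lt_of_lt_of_le b hn)).1)
  have vg3L : ∀ n, n ≤ m → φ (g1 ^ n * g3) = z * x ^ n := fun n hn =>
    val_left_anti φ hbij h g1 g3 h13 n (fun k a b => (N k a (lt_of_lt_of_le b hn)).2)
  have vg3R : ∀ n, n ≤ m → φ (g3 * g1 ^ n) = x ^ n * z := fun n hn =>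
    val_right_anti φ hbij h g1 g3 hb_g3r n (fun k a b => (N k a (lt_of_lt_of_le b hn)).2)
  -- the word t = g1^m * (g2*g3)
  have hD := weak_hom φ h (g1 ^ m) (g2 * g3)
  rw [phi_pow φ hbij h, hyzval] at hD
  -- C1 : t = (g2 * g1^(m-1)) * (g1 * g3)
  obtain ⟨p, rfl⟩ : ∃ p, m = p + 1 := ⟨m - 1, by omega⟩
  have hp1 : 1 ≤ p := by omega
  have hC1 : g1 ^ (p + 1) * (g2 * g3) = (g2 * g1 ^ p) * (g1 * g3) := by
    calc g1 ^ (p + 1) * (g2 * g3) = (g1 ^ (p + 1) * g2) * g3 := by rw [mul_assoc]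
      _ = (g2 * g1 ^ (p + 1)) * g3 := by rw [M]
      _ = (g2 * g1 ^ p) * (g1 * g3) := by rw [pow_succ]; simp [mul_assoc]
  have hW1 := weak_hom φ h (g2 * g1 ^ p) (g1 * g3)
  rw [← hC1, vg2R p (by omega), h13] at hW1
  -- Case on D
  rcases hD with hD1 | hD2
  swap
  · -- W = (y*z)*x^(p+1) : refute via C1
    rcases hW1 with hc | hc
    · -- (y*z)*x^(p+1) = (y*x^p)*(z*x)
      rw [hD2] at hc
      have e1 : z * x ^ (p + 1) = x ^ p * (z * x) := by
        apply mul_left_cancel (a := y)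
        rw [← mul_assoc, ← mul_assoc, hc, mul_assoc]
      have e2 : (z * x ^ p) * x = (x ^ p * z) * x := by
        calc (z * x ^ p) * x = z * (x ^ p * x) := by rw [mul_assoc]
          _ = z * x ^ (p + 1) := by rw [← pow_succ]
          _ = x ^ p * (z * x) := e1
          _ = (x ^ p * z) * x := by rw [mul_assoc]
      exact NzG2 p hp1 (by omega) (mul_right_cancel e2).symm
    · -- (y*z)*x^(p+1) = (z*x)*(y*x^p)
      rw [hD2] at hc
      have e1 : y * x ^ (p + 1) = x * (y * x ^ p) := by
        apply mul_left_cancel (a := z)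
        rw [← mul_assoc, ← hyz, hc, mul_assoc]
      have e2 : (y * x) * x ^ p = (x * y) * x ^ p := by
        rw [mul_assoc, ← pow_succ']
        rw [e1, mul_assoc]
      exact Ny1 (mul_right_cancel e2).symm
  · -- W = x^(p+1)*(y*z)
    -- refute hW1 left case (U_1)
    have hV1 : x ^ (p + 1) * (y * z) = (z * x) * (y * x ^ p) := by
      rcases hW1 with hc | hc
      · exfalso
        rw [hD1] at hc
        -- x^(p+1)*(y*z) = (y*x^p)*(z*x)
        have e1 : x ^ (p + 1) * z = x ^ p * (z * x) := by
          apply mul_left_cancel (a := y)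
          calc y * (x ^ (p + 1) * z) = (y * x ^ (p + 1)) * z := by rw [mul_assoc]
            _ = (x ^ (p + 1) * y) * z := by rw [My2]
            _ = x ^ (p + 1) * (y * z) := by rw [mul_assoc]
            _ = (y * x ^ p) * (z * x) := hc
            _ = y * (x ^ p * (z * x)) := by rw [mul_assoc]
        have e2 : x ^ p * (x * z) = x ^ p * (z * x) := by
          rw [← mul_assoc, ← pow_succ]; exact e1
        exact Nz1 (mul_left_cancel e2)
      · rw [← hD1, hc]
    rcases Nat.lt_or_ge p 2 with hp2 | hp3
    · -- p = 1, m = 2 case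
      have hp1' : p = 1 := by omega
      subst hp1'
      have hV1' : x ^ 2 * (y * z) = (z * x) * (y * x) := by
        simpa only [show (1:ℕ)+1 = 2 from rfl, pow_one] using hV1
      have My2' : x ^ 2 * y = y * x ^ 2 := by
        simpa only [show (1:ℕ)+1 = 2 from rfl] using My2
      -- the word t' = g3*(g1^2*g2)
      have hW'2 := weak_hom φ h g3 (g1 ^ 2 * g2)
      rw [vg2L 2 le_rfl] at hW'2
      have hC'1 : g3 * (g1 ^ 2 * g2) = (g3 * g1) * (g1 * g2) := by
        rw [pow_two]; simp [mul_assoc]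
      have hW'1 := weak_hom φ h (g3 * g1) (g1 * g2)
      rw [← hC'1, hb_g3r, h12] at hW'1
      have hC'0 : g3 * (g1 ^ 2 * g2) = (g3 * g1 ^ 2) * g2 := by rw [mul_assoc]
      have hW'0 := weak_hom φ h (g3 * g1 ^ 2) g2
      rw [← hC'0, vg3R 2 le_rfl] at hW'0
      rcases hW'2 with hA | hA
      · -- φ t' = z*(x^2*y)
        rcases hW'1 with hB | hB
        · -- z*(x^2*y) = (x*z)*(x*y) ⇒ z*x = x*z
          rw [hA] at hB
          have e1 : ((z * x) * x) * y = ((x * z) * x) * y := by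
            calc ((z * x) * x) * y = z * (x ^ 2 * y) := by rw [pow_two]; simp [mul_assoc]
              _ = (x * z) * (x * y) := hB
              _ = ((x * z) * x) * y := by simp [mul_assoc]
          exact Nz1 (mul_right_cancel (mul_right_cancel e1)).symm
        · -- κ4 : z*(x^2*y) = (x*y)*(x*z)
          rw [hA] at hB
          rcases hW'0 with hCc | hCc
          · -- z*(x^2*y) = (x^2*z)*y  (M' case)
            rw [hA] at hCc
            have hM' : z * x ^ 2 = x ^ 2 * z := by
              have e1 : (z * x ^ 2) * y = (x ^ 2 * z) * y := by
                rw [mul_assoc]; rw [hCc]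
              exact mul_right_cancel e1
            -- from κ4 : x*(z*y) = y*(x*z)
            have e2 : x * (x * (z * y)) = x * (y * (x * z)) := by
              calc x * (x * (z * y)) = (x ^ 2 * z) * y := by rw [pow_two]; simp [mul_assoc]
                _ = (z * x ^ 2) * y := by rw [hM']
                _ = z * (x ^ 2 * y) := by rw [mul_assoc]
                _ = (x * y) * (x * z) := hB
                _ = x * (y * (x * z)) := by rw [mul_assoc]
            have e3 : (x * z) * y = y * (x * z) := by
              have := mul_left_cancel e2
              rw [← mul_assoc] at this
              exact this
            have comy_xz : Commute y (x * z) := e3.symm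
            have comy_z : Commute y z := hyz
            have comy_x : Commute y x := by
              have hcc := comy_xz.mul_right comy_z.inv_right
              rwa [mul_inv_cancel_right] at hcc
            exact Ny1 comy_x.symm
          · -- κ3 : z*(x^2*y) = y*(x^2*z)
            rw [hA] at hCc
            -- y*(x^2*z) = (x^2*y)*z by My2
            have e1 : z * (x ^ 2 * y) = (x ^ 2 * y) * z := by
              calc z * (x ^ 2 * y) = y * (x ^ 2 * z) := hCc
                _ = (y * x ^ 2) * z := by rw [mul_assoc]
                _ = (x ^ 2 * y) * z := by rw [My2']
            -- combine with hV1 : x^2*(y*z) = (z*x)*(y*x^1)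
            have e2 : x * (x * y) = x * (y * x) := by
              calc x * (x * y) = x ^ 2 * y := by rw [pow_two, mul_assoc]
                _ = z⁻¹ * (z * (x ^ 2 * y)) := by simp [mul_assoc]
                _ = z⁻¹ * ((x ^ 2 * y) * z) := by rw [e1]
                _ = z⁻¹ * (x ^ 2 * (y * z)) := by rw [mul_assoc]
                _ = z⁻¹ * ((z * x) * (y * x)) := by rw [hV1']
                _ = x * (y * x) := by simp [mul_assoc]
            exact Ny1 (mul_left_cancel e2)
      · -- φ t' = (x^2*y)*z
        rcases hW'1 with hB | hB
        · -- (x^2*y)*z = (x*z)*(x*y) ⇒ Commute z (x*y)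
          rw [hA] at hB
          have e1 : x * ((x * y) * z) = x * (z * (x * y)) := by
            calc x * ((x * y) * z) = (x ^ 2 * y) * z := by rw [pow_two]; simp [mul_assoc]
              _ = (x * z) * (x * y) := hB
              _ = x * (z * (x * y)) := by rw [mul_assoc]
          have comz_xy : Commute z (x * y) := (mul_left_cancel e1).symm
          have comz_y : Commute z y := hyz.symm
          have comz_x : Commute z x := by
            have hcc := comz_xy.mul_right comz_y.inv_right
            rwa [mul_inv_cancel_right] at hcc
          exact Nz1 comz_x.symm
        · -- (x^2*y)*z = (x*y)*(x*z) ⇒ x*y = y*x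
          rw [hA] at hB
          have e1 : x * ((x * y) * z) = x * ((y * x) * z) := by
            calc x * ((x * y) * z) = (x ^ 2 * y) * z := by rw [pow_two]; simp [mul_assoc]
              _ = (x * y) * (x * z) := hB
              _ = x * ((y * x) * z) := by simp [mul_assoc]
          have e2 := mul_left_cancel e1
          exact Ny1 (mul_right_cancel e2)
    · -- p ≥ 2, i.e. m ≥ 3
      obtain ⟨k, rfl⟩ : ∃ k, p = k + 1 := ⟨p - 1, by omega⟩
      -- C2 : t = (g2*g1^k) * (g1^2*g3)
      have hC2 : g1 ^ (k + 1 + 1) * (g2 * g3) = (g2 * g1 ^ k) * (g1 ^ 2 * g3) := by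
        calc g1 ^ (k + 1 + 1) * (g2 * g3) = (g1 ^ (k + 1 + 1) * g2) * g3 := by rw [mul_assoc]
          _ = (g2 * g1 ^ (k + 1 + 1)) * g3 := by rw [M]
          _ = (g2 * (g1 ^ k * g1 ^ 2)) * g3 := by rw [← pow_add]
          _ = (g2 * g1 ^ k) * (g1 ^ 2 * g3) := by simp [mul_assoc]
      have hW2 := weak_hom φ h (g2 * g1 ^ k) (g1 ^ 2 * g3)
      rw [← hC2, vg2R k (by omega), vg3L 2 (by omega)] at hW2
      rcases hW2 with hc | hc
      · -- U_2 : x^(k+2)*(y*z) = (y*x^k)*(z*x^2)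
        rw [hD1] at hc
        have e1 : x ^ (k + 1 + 1) * z = x ^ k * (z * x ^ 2) := by
          apply mul_left_cancel (a := y)
          calc y * (x ^ (k + 1 + 1) * z) = (y * x ^ (k + 1 + 1)) * z := by rw [mul_assoc]
            _ = (x ^ (k + 1 + 1) * y) * z := by rw [My2]
            _ = x ^ (k + 1 + 1) * (y * z) := by rw [mul_assoc]
            _ = (y * x ^ k) * (z * x ^ 2) := hc
            _ = y * (x ^ k * (z * x ^ 2)) := by rw [mul_assoc]
        have e2 : x ^ k * (x ^ 2 * z) = x ^ k * (z * x ^ 2) := by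
          rw [← mul_assoc, ← pow_add]; exact e1
        exact NzG2 2 (by omega) (by omega) (mul_left_cancel e2)
      · -- V_2 together with V_1 (hV1)
        rw [hD1] at hc
        -- hV1 : x^(k+2)*(y*z) = (z*x)*(y*x^(k+1)) ; hc : = (z*x^2)*(y*x^k)
        have e1 : x * (y * x ^ (k + 1)) = x * (x * (y * x ^ k)) := by
          apply mul_left_cancel (a := z)
          calc z * (x * (y * x ^ (k + 1))) = (z * x) * (y * x ^ (k + 1)) := by rw [mul_assoc]
            _ = (z * x ^ 2) * (y * x ^ k) := by rw [← hV1, hc]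
            _ = z * (x ^ 2 * (y * x ^ k)) := by rw [mul_assoc]
            _ = z * (x * (x * (y * x ^ k))) := by rw [pow_two, mul_assoc]
        have e2 : (y * x) * x ^ k = (x * y) * x ^ k := by
          have e3 := mul_left_cancel e1
          calc (y * x) * x ^ k = y * (x * x ^ k) := by rw [mul_assoc]
            _ = y * x ^ (k + 1) := by rw [← pow_succ']
            _ = x * (y * x ^ k) := e3
            _ = (x * y) * x ^ k := by rw [mul_assoc]
        exact Ny1 (mul_right_cancel e2).symm

theorem key_lemma_op (G1 G2 : Type*) [Group G1] [Group G2]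
    (φ : G1 → G2) (hbij : Function.Bijective φ)
    (h : ∀ S : Multiset G1, IsProductOne S ↔ IsProductOne (S.map φ))
    (g1 g2 g3 : G1)
    (h12 : φ (g1 * g2) = φ g1 * φ g2) (h13 : φ (g1 * g3) = φ g3 * φ g1)
    (hne12 : g1 * g2 ≠ g2 * g1) (hne13 : g1 * g3 ≠ g3 * g1)
    (hcomm : g2 * g3 = g3 * g2)
    (m : ℕ) (hm : 2 ≤ m)
    (N : ∀ k, 1 ≤ k → k < m → g1 ^ k * g2 ≠ g2 * g1 ^ k ∧ g1 ^ k * g3 ≠ g3 * g1 ^ k)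
    (M : g1 ^ m * g3 = g3 * g1 ^ m) : False := by
  classical
  have hbij' : Function.Bijective (fun a : G1 => MulOpposite.op (φ a)) :=
    MulOpposite.opEquiv.bijective.comp hbij
  have h' : ∀ S : Multiset G1,
      IsProductOne S ↔ IsProductOne (S.map (fun a : G1 => MulOpposite.op (φ a))) := by
    intro S
    have : S.map (fun a : G1 => MulOpposite.op (φ a)) = (S.map φ).map MulOpposite.op := by
      rw [Multiset.map_map]; rfl
    rw [this, ipo_op]
    exact h S
  exact key_lemma G1 G2ᵐᵒᵖ (fun a => MulOpposite.op (φ a)) hbij' h' g1 g3 g2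
    (by rw [h13, MulOpposite.op_mul]) (by rw [h12, MulOpposite.op_mul])
    hne13 hne12 hcomm.symm m hm
    (fun k a b => ⟨(N k a b).2, (N k a b).1⟩) M

theorem A5_final (G1 G2 : Type*) [Group G1] [Group G2]
    (φ : G1 → G2) (hbij : Function.Bijective φ)
    (h : ∀ S : Multiset G1, IsProductOne S ↔ IsProductOne (S.map φ))
    (g1 g2 g3 : G1)
    (h12 : φ (g1 * g2) = φ g1 * φ g2) (h13 : φ (g1 * g3) = φ g3 * φ g1)
    (hne12 : g1 * g2 ≠ g2 * g1) (hne13 : g1 * g3 ≠ g3 * g1)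
    (hcomm : g2 * g3 = g3 * g2) :
    ∀ n : ℕ, 0 < n →
      (g1 ^ n * g2 ≠ g2 * g1 ^ n ∧ g1 ^ n * g3 ≠ g3 * g1 ^ n) ∧
      (φ (g1 ^ n * g2) = φ (g1 ^ n) * φ g2 ∧ φ (g1 ^ n * g3) = φ g3 * φ (g1 ^ n)) ∧
      (φ (g2 * g1 ^ n) = φ g2 * φ (g1 ^ n) ∧ φ (g3 * g1 ^ n) = φ (g1 ^ n) * φ g3) := by
  have hb_g2r : φ (g2 * g1) = φ g2 * φ g1 := by
    rcases weak_hom φ h g2 g1 with hw | hw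
    · exact hw
    · exact absurd (hbij.1 (hw.trans h12.symm)) (fun hc => hne12 hc.symm)
  have hb_g3r : φ (g3 * g1) = φ g1 * φ g3 := by
    rcases weak_hom φ h g3 g1 with hw | hw
    · exact absurd (hbij.1 (hw.trans h13.symm)) (fun hc => hne13 hc.symm)
    · exact hw
  have Nboth : ∀ n, 0 < n → g1 ^ n * g2 ≠ g2 * g1 ^ n ∧ g1 ^ n * g3 ≠ g3 * g1 ^ n := by
    intro n
    induction n using Nat.strong_induction_on with
    | _ n ih =>
      intro hn
      rcases eq_or_lt_of_le (Nat.succ_le_of_lt hn) with h1 | h2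
      · have : n = 1 := h1.symm
        subst this
        rw [pow_one]
        exact ⟨hne12, hne13⟩
      · have hm : 2 ≤ n := h2
        constructor
        · intro hM
          exact key_lemma G1 G2 φ hbij h g1 g2 g3 h12 h13 hne12 hne13 hcomm n hm
            (fun k a b => ih k b a) hM
        · intro hM
          exact key_lemma_op G1 G2 φ hbij h g1 g2 g3 h12 h13 hne12 hne13 hcomm n hm
            (fun k a b => ih k b a) hM
  intro n hn
  refine ⟨Nboth n hn, ⟨?_, ?_⟩, ⟨?_, ?_⟩⟩
  · rw [phi_pow φ hbij h g1 n]
    exact val_left_homo φ hbij h g1 g2 h12 n (fun k a _ => (Nboth k a).1)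
  · rw [phi_pow φ hbij h g1 n]
    exact val_left_anti φ hbij h g1 g3 h13 n (fun k a _ => (Nboth k a).2)
  · rw [phi_pow φ hbij h g1 n]
    exact val_right_homo φ hbij h g1 g2 hb_g2r n (fun k a _ => (Nboth k a).1)
  · rw [phi_pow φ hbij h g1 n]
    exact val_right_anti φ hbij h g1 g3 hb_g3r n (fun k a _ => (Nboth k a).2)


theorem A5_induction (G1 G2 : Type*) [Group G1] [Group G2]
    (φ : G1 → G2) (hbij : Function.Bijective φ)
    (h : ∀ S : Multiset G1, IsProductOne S ↔ IsProductOne (S.map φ))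
    (g1 g2 g3 : G1)
    (h12 : φ (g1 * g2) = φ g1 * φ g2) (h13 : φ (g1 * g3) = φ g3 * φ g1)
    (hne12 : g1 * g2 ≠ g2 * g1) (hne13 : g1 * g3 ≠ g3 * g1)
    (hcomm : g2 * g3 = g3 * g2) :
    ∀ n : ℕ, 0 < n →
      (g1 ^ n * g2 ≠ g2 * g1 ^ n ∧ g1 ^ n * g3 ≠ g3 * g1 ^ n) ∧
      (φ (g1 ^ n * g2) = φ (g1 ^ n) * φ g2 ∧ φ (g1 ^ n * g3) = φ g3 * φ (g1 ^ n)) ∧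
      (φ (g2 * g1 ^ n) = φ g2 * φ (g1 ^ n) ∧ φ (g3 * g1 ^ n) = φ (g1 ^ n) * φ g3) :=
  A5_final G1 G2 φ hbij h g1 g2 g3 h12 h13 hne12 hne13 hcomm
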